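/- Under the stated assumptions, the rescaled bias of the two-query gradient estimator has the exact limit lim_{c→0⁺} c⁻²·(E[ĝ(θ,c)] − ∇L(θ)) = (1/6)·E[ D³L(θ)(Δ,Δ,Δ) · φ(Δ) ] for every θ ∈ ℝ^d, where D³L(θ)(Δ,Δ,Δ) is the third derivative of L at θ evaluated at the triple (Δ,Δ,Δ). -/

import Mathlib

open MeasureTheory Filter Topology

open Set

lemma aux_three_apply {E : Type*} [NormedAddCommGroup E] [NormedSpace ℝ E]
    (L : E → ℝ) (x u v w : E) :
    iteratedFDeriv ℝ 3 L x ![u, v, w] = fderiv ℝ (fderiv ℝ (fderiv ℝ L)) x u v w := by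
  have h := iteratedFDeriv_succ_apply_right (𝕜 := ℝ) (f := L) (x := x) (n := 2) ![u, v, w]
  rw [h, iteratedFDeriv_two_apply]
  congr 1

section pack
variable {E : Type*} [NormedAddCommGroup E] [NormedSpace ℝ E]
  (L : E → ℝ) (θ v : E)

lemma aux_line (t : ℝ) : HasDerivAt (fun s : ℝ => θ + s • v) v t := by
  simpa using ((hasDerivAt_id t).smul_const v).const_add θ

variable {L} (hL : ContDiff ℝ 3 L)
include hL

lemma aux_d1 (t : ℝ) :
    HasDerivAt (fun s : ℝ => L (θ + s • v)) (fderiv ℝ L (θ + t • v) v) t := by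
  have := ((hL.differentiable (by norm_num) (θ + t • v)).hasFDerivAt).comp_hasDerivAt t
    (aux_line θ v t)
  simpa [Function.comp_def] using this

lemma aux_d2 (t : ℝ) :
    HasDerivAt (fun s : ℝ => fderiv ℝ L (θ + s • v) v)
      (fderiv ℝ (fderiv ℝ L) (θ + t • v) v v) t := by
  have h1 : ContDiff ℝ 2 (fderiv ℝ L) := hL.fderiv_right (by norm_num)
  have hin : HasDerivAt (fun s : ℝ => fderiv ℝ L (θ + s • v))
      (fderiv ℝ (fderiv ℝ L) (θ + t • v) v) t :=
    ((h1.differentiable (by norm_num) (θ + t • v)).hasFDerivAt).comp_hasDerivAt t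
      (aux_line θ v t)
  have := ((ContinuousLinearMap.apply ℝ ℝ v).hasFDerivAt).comp_hasDerivAt t hin
  simpa [Function.comp_def] using this

lemma aux_d3 (t : ℝ) :
    HasDerivAt (fun s : ℝ => fderiv ℝ (fderiv ℝ L) (θ + s • v) v v)
      (fderiv ℝ (fderiv ℝ (fderiv ℝ L)) (θ + t • v) v v v) t := by
  have h1 : ContDiff ℝ 2 (fderiv ℝ L) := hL.fderiv_right (by norm_num)
  have h2 : ContDiff ℝ 1 (fderiv ℝ (fderiv ℝ L)) := h1.fderiv_right (by norm_num)
  have hin :=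
    ((h2.differentiable (by norm_num) (θ + t • v)).hasFDerivAt).comp_hasDerivAt t
      (aux_line θ v t)
  have ha := ((ContinuousLinearMap.apply ℝ (E →L[ℝ] ℝ) v).hasFDerivAt).comp_hasDerivAt t hin
  have := ((ContinuousLinearMap.apply ℝ ℝ v).hasFDerivAt).comp_hasDerivAt t ha
  simpa [Function.comp_def] using this

end pack

lemma aux_nonneg {f g : ℝ → ℝ} (hf : ∀ t, HasDerivAt f (g t) t)
    (hg : ∀ t, 0 ≤ t → 0 ≤ g t) (hf0 : f 0 = 0) {c : ℝ} (hc : 0 ≤ c) : 0 ≤ f c := by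
  have hmono : MonotoneOn f (Set.Ici 0) := by
    refine monotoneOn_of_deriv_nonneg (convex_Ici 0)
      (fun x _ => (hf x).continuousAt.continuousWithinAt)
      (fun x _ => (hf x).differentiableAt.differentiableWithinAt) (fun x hx => ?_)
    rw [(hf x).deriv]
    rw [interior_Ici] at hx
    exact hg x hx.le
  have := hmono (by simp : (0:ℝ) ∈ Ici 0) (mem_Ici.2 hc) hc
  rwa [hf0] at this

lemma aux_taylor_bound {ψ ψ1 ψ2 : ℝ → ℝ} {K : ℝ}
    (h1 : ∀ t, HasDerivAt ψ (ψ1 t) t) (h2 : ∀ t, HasDerivAt ψ1 (ψ2 t) t)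
    (hLip : ∀ s t : ℝ, |ψ2 t - ψ2 s| ≤ K * |t - s|) {c : ℝ} (hc : 0 ≤ c) :
    |ψ c - ψ (-c) - 2*c*ψ1 0| ≤ K/3 * c^3 := by
  set u : ℝ → ℝ := fun t => ψ t - ψ (-t) - 2*t*ψ1 0 with hu
  set w : ℝ → ℝ := fun t => ψ1 t + ψ1 (-t) - 2*ψ1 0 with hw
  have hud : ∀ t, HasDerivAt u (w t) t := by
    intro t
    have hn : HasDerivAt (fun t : ℝ => ψ (-t)) (ψ1 (-t) * (-1)) t :=
      (h1 (-t)).comp t (hasDerivAt_neg t)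
    have hlin : HasDerivAt (fun t : ℝ => 2*t*ψ1 0) (2*1*ψ1 0) t :=
      ((hasDerivAt_id t).const_mul 2).mul_const (ψ1 0)
    have := ((h1 t).sub hn).sub hlin
    exact this.congr_deriv (by simp [hw])
  have hwd : ∀ t, HasDerivAt w (ψ2 t - ψ2 (-t)) t := by
    intro t
    have hn : HasDerivAt (fun t : ℝ => ψ1 (-t)) (ψ2 (-t) * (-1)) t :=
      (h2 (-t)).comp t (hasDerivAt_neg t)
    have := ((h2 t).add hn).sub (hasDerivAt_const t (2*ψ1 0))
    exact this.congr_deriv (by ring)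
  have hw2 : ∀ t : ℝ, 0 ≤ t → |ψ2 t - ψ2 (-t)| ≤ 2*K*t := by
    intro t ht
    calc |ψ2 t - ψ2 (-t)| ≤ K * |t - (-t)| := hLip (-t) t
    _ = 2*K*t := by rw [abs_of_nonneg (by linarith : (0:ℝ) ≤ t - (-t))]; ring
  have hK : 0 ≤ K := le_trans (abs_nonneg (ψ2 1 - ψ2 0)) (by simpa using hLip 0 1)
  have w0 : w 0 = 0 := by simp [hw]; ring
  have hwbd : ∀ t : ℝ, 0 ≤ t → |w t| ≤ K * t^2 := by
    intro t ht
    have hsq : ∀ s : ℝ, HasDerivAt (fun s : ℝ => K * s^2) (K * (2*s)) s := by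
      intro s
      have := (hasDerivAt_pow 2 s).const_mul K
      exact this.congr_deriv (by push_cast; ring)
    rw [abs_le]
    constructor
    · have h := aux_nonneg (f := fun s => K*s^2 + w s) (g := fun s => K*(2*s) + (ψ2 s - ψ2 (-s)))
        (fun s => (hsq s).add (hwd s))
        (fun s hs => by have := (abs_le.1 (hw2 s hs)).1; beta_reduce; linarith)
        (by beta_reduce; rw [w0]; ring) ht
      beta_reduce at h; linarith
    · have h := aux_nonneg (f := fun s => K*s^2 - w s) (g := fun s => K*(2*s) - (ψ2 s - ψ2 (-s)))
        (fun s => (hsq s).sub (hwd s))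
        (fun s hs => by have := (abs_le.1 (hw2 s hs)).2; beta_reduce; linarith)
        (by beta_reduce; rw [w0]; ring) ht
      beta_reduce at h; linarith
  have hcube : ∀ s : ℝ, HasDerivAt (fun s : ℝ => K/3 * s^3) (K * s^2) s := by
    intro s
    have := (hasDerivAt_pow 3 s).const_mul (K/3)
    exact this.congr_deriv (by push_cast; ring)
  have u0 : u 0 = 0 := by simp [hu]
  have h₁ := aux_nonneg (f := fun s => K/3*s^3 - u s) (g := fun s => K*s^2 - w s)
      (fun s => (hcube s).sub (hud s))
      (fun s hs => by have := (abs_le.1 (hwbd s hs)).2; beta_reduce; linarith)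
      (by beta_reduce; rw [u0]; ring) hc
  have h₂ := aux_nonneg (f := fun s => K/3*s^3 + u s) (g := fun s => K*s^2 + w s)
      (fun s => (hcube s).add (hud s))
      (fun s hs => by have := (abs_le.1 (hwbd s hs)).1; beta_reduce; linarith)
      (by beta_reduce; rw [u0]; ring) hc
  beta_reduce at h₁ h₂
  have hueq : u c = ψ c - ψ (-c) - 2*c*ψ1 0 := rfl
  rw [abs_le]; constructor <;> [linarith; linarith]

lemma aux_core_lim {ψ ψ1 ψ2 : ℝ → ℝ} {D : ℝ}
    (h1 : ∀ t, HasDerivAt ψ (ψ1 t) t) (h2 : ∀ t, HasDerivAt ψ1 (ψ2 t) t)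
    (h3 : HasDerivAt ψ2 D 0) :
    Tendsto (fun c => (ψ c - ψ (-c) - 2*c*ψ1 0)/(2*c^3)) (𝓝[>] (0:ℝ)) (𝓝 (D/6)) := by
  have hs : Tendsto (slope ψ2 0) (𝓝[≠] (0:ℝ)) (𝓝 D) := hasDerivAt_iff_tendsto_slope.mp h3
  have hneg : Tendsto (fun c : ℝ => -c) (𝓝[>] (0:ℝ)) (𝓝[≠] (0:ℝ)) := by
    refine tendsto_nhdsWithin_of_tendsto_nhds_of_eventually_within _ ?_ ?_
    · simpa using (continuous_neg.tendsto (0:ℝ)).mono_left nhdsWithin_le_nhds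
    · filter_upwards [self_mem_nhdsWithin] with c (hc : c ∈ Ioi (0:ℝ))
      simp only [mem_compl_iff, mem_singleton_iff]
      intro h; rw [neg_eq_zero] at h; exact absurd h (ne_of_gt hc)
  have t1 : Tendsto (fun c : ℝ => slope ψ2 0 c) (𝓝[>] (0:ℝ)) (𝓝 D) :=
    hs.mono_left (nhdsWithin_mono 0 (fun x hx => ne_of_gt hx))
  have t2 : Tendsto (fun c : ℝ => slope ψ2 0 (-c)) (𝓝[>] (0:ℝ)) (𝓝 D) := hs.comp hneg
  have slope_lim : Tendsto (fun c : ℝ => (ψ2 c - ψ2 (-c))/(12*c)) (𝓝[>] (0:ℝ)) (𝓝 (D/6)) := by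
    have h12 := (t1.add t2).div_const 12
    have heq : (D + D)/12 = D/6 := by ring
    rw [heq] at h12
    refine h12.congr' ?_
    filter_upwards [self_mem_nhdsWithin] with c (hc : c ∈ Ioi (0:ℝ))
    have hc0 : c ≠ 0 := ne_of_gt hc
    rw [slope_def_field, slope_def_field, sub_zero, sub_zero, div_neg, ← sub_eq_add_neg,
        div_sub_div_same, sub_sub_sub_cancel_right, div_div, mul_comm c 12]
  have lh2 : Tendsto (fun c : ℝ => (ψ1 c + ψ1 (-c) - 2*ψ1 0)/(6*c^2)) (𝓝[>] (0:ℝ)) (𝓝 (D/6)) := by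
    refine HasDerivAt.lhopital_zero_nhdsGT (f' := fun c => ψ2 c - ψ2 (-c))
      (g' := fun c => 12*c) ?_ ?_ ?_ ?_ ?_ slope_lim
    · filter_upwards with c
      have hn : HasDerivAt (fun t : ℝ => ψ1 (-t)) (ψ2 (-c) * (-1)) c :=
        (h2 (-c)).comp c (hasDerivAt_neg c)
      have := ((h2 c).add hn).sub (hasDerivAt_const c (2*ψ1 0))
      exact this.congr_deriv (by ring)
    · filter_upwards with c
      have := (hasDerivAt_pow 2 c).const_mul (6:ℝ)
      exact this.congr_deriv (by push_cast; ring)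
    · filter_upwards [self_mem_nhdsWithin] with c (hc : c ∈ Ioi (0:ℝ))
      have hc' : (0:ℝ) < c := hc
      positivity
    · have hcont : ContinuousAt (fun c : ℝ => ψ1 c + ψ1 (-c) - 2*ψ1 0) 0 := by
        have c1 : ContinuousAt ψ1 (0:ℝ) := (h2 0).continuousAt
        have c2 : ContinuousAt (fun c : ℝ => ψ1 (-c)) 0 :=
          ContinuousAt.comp (x := (0:ℝ)) (by simpa using c1) continuous_neg.continuousAt
        exact (c1.add c2).sub continuousAt_const
      have h0 : Tendsto (fun c : ℝ => ψ1 c + ψ1 (-c) - 2*ψ1 0) (𝓝 0)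
          (𝓝 (ψ1 0 + ψ1 (-0) - 2*ψ1 0)) := hcont.tendsto
      rw [show ψ1 0 + ψ1 (-0) - 2*ψ1 0 = 0 by rw [neg_zero]; ring] at h0
      exact h0.mono_left nhdsWithin_le_nhds
    · have h0 : Tendsto (fun c : ℝ => 6*c^2) (𝓝 (0:ℝ)) (𝓝 (6*0^2)) :=
        (continuous_const.mul (continuous_pow 2)).tendsto 0
      rw [show (6:ℝ)*0^2 = 0 by ring] at h0
      exact h0.mono_left nhdsWithin_le_nhds
  refine HasDerivAt.lhopital_zero_nhdsGT (f' := fun c => ψ1 c + ψ1 (-c) - 2*ψ1 0)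
    (g' := fun c => 6*c^2) ?_ ?_ ?_ ?_ ?_ lh2
  · filter_upwards with c
    have hn : HasDerivAt (fun t : ℝ => ψ (-t)) (ψ1 (-c) * (-1)) c :=
      (h1 (-c)).comp c (hasDerivAt_neg c)
    have hlin : HasDerivAt (fun t : ℝ => 2*t*ψ1 0) (2*1*ψ1 0) c :=
      ((hasDerivAt_id c).const_mul 2).mul_const (ψ1 0)
    have := ((h1 c).sub hn).sub hlin
    exact this.congr_deriv (by ring)
  · filter_upwards with c
    have := (hasDerivAt_pow 3 c).const_mul (2:ℝ)
    exact this.congr_deriv (by push_cast; ring)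
  · filter_upwards [self_mem_nhdsWithin] with c (hc : c ∈ Ioi (0:ℝ))
    have hc' : (0:ℝ) < c := hc
    positivity
  · have hcont : ContinuousAt (fun c : ℝ => ψ c - ψ (-c) - 2*c*ψ1 0) 0 := by
      have c1 : ContinuousAt ψ (0:ℝ) := (h1 0).continuousAt
      have c2 : ContinuousAt (fun c : ℝ => ψ (-c)) 0 :=
        ContinuousAt.comp (x := (0:ℝ)) (by simpa using c1) continuous_neg.continuousAt
      exact (c1.sub c2).sub
        ((continuous_const.mul continuous_id).continuousAt.mul continuousAt_const)
    have h0 : Tendsto (fun c : ℝ => ψ c - ψ (-c) - 2*c*ψ1 0) (𝓝 0)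
        (𝓝 (ψ 0 - ψ (-0) - 2*0*ψ1 0)) := hcont.tendsto
    rw [show ψ 0 - ψ (-0) - 2*0*ψ1 0 = 0 by rw [neg_zero]; ring] at h0
    exact h0.mono_left nhdsWithin_le_nhds
  · have h0 : Tendsto (fun c : ℝ => 2*c^3) (𝓝 (0:ℝ)) (𝓝 (2*0^3)) :=
      (continuous_const.mul (continuous_pow 3)).tendsto 0
    rw [show (2:ℝ)*0^3 = 0 by ring] at h0
    exact h0.mono_left nhdsWithin_le_nhds

section key
variable {E : Type*} [NormedAddCommGroup E] [NormedSpace ℝ E]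
  {L : E → ℝ} (hL : ContDiff ℝ 3 L) (θ v : E)
include hL

lemma aux_key_bound {D₁ : ℝ} (hLbd : ∀ x, ‖iteratedFDeriv ℝ 3 L x‖ ≤ D₁)
    {c : ℝ} (hc : 0 ≤ c) :
    |L (θ + c • v) - L (θ - c • v) - 2*c*(fderiv ℝ L θ v)| ≤ (D₁*‖v‖^3)/3 * c^3 := by
  have hbd3 : ∀ r : ℝ, |fderiv ℝ (fderiv ℝ (fderiv ℝ L)) (θ + r • v) v v v| ≤ D₁ * ‖v‖^3 := by
    intro r
    have h := aux_three_apply L (θ + r • v) v v v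
    rw [← h]
    calc |iteratedFDeriv ℝ 3 L (θ + r • v) ![v, v, v]|
        ≤ ‖iteratedFDeriv ℝ 3 L (θ + r • v)‖ * ∏ i, ‖(![v, v, v]) i‖ :=
          (iteratedFDeriv ℝ 3 L (θ + r • v)).le_opNorm ![v, v, v]
      _ ≤ D₁ * ‖v‖^3 := by
          rw [Fin.prod_univ_three]
          simp only [Matrix.cons_val_zero, Matrix.cons_val_one, Matrix.head_cons,
            Matrix.cons_val_two, Matrix.tail_cons]
          have : ‖v‖ * ‖v‖ * ‖v‖ = ‖v‖^3 := by ring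
          rw [this]
          exact mul_le_mul_of_nonneg_right (hLbd _) (by positivity)
  have hLip : ∀ s t : ℝ,
      |fderiv ℝ (fderiv ℝ L) (θ + t • v) v v - fderiv ℝ (fderiv ℝ L) (θ + s • v) v v|
        ≤ (D₁ * ‖v‖^3) * |t - s| := by
    intro s t
    have := Convex.norm_image_sub_le_of_norm_hasDerivWithin_le
      (f := fun r : ℝ => fderiv ℝ (fderiv ℝ L) (θ + r • v) v v)
      (f' := fun r : ℝ => fderiv ℝ (fderiv ℝ (fderiv ℝ L)) (θ + r • v) v v v)
      (C := D₁ * ‖v‖^3) (s := Set.univ)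
      (fun r _ => (aux_d3 θ v hL r).hasDerivWithinAt)
      (fun r _ => by simpa using hbd3 r) convex_univ (Set.mem_univ s) (Set.mem_univ t)
    simpa [Real.norm_eq_abs] using this
  have hmain := aux_taylor_bound (aux_d1 θ v hL) (aux_d2 θ v hL) hLip hc
  have e1 : θ + (-c) • v = θ - c • v := by rw [neg_smul, ← sub_eq_add_neg]
  have e2 : θ + (0:ℝ) • v = θ := by rw [zero_smul, add_zero]
  rw [e1, e2] at hmain
  calc |L (θ + c • v) - L (θ - c • v) - 2*c*(fderiv ℝ L θ v)|
      ≤ (D₁ * ‖v‖^3)/3 * c^3 := hmain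
    _ = (D₁*‖v‖^3)/3 * c^3 := by ring

lemma aux_key_lim :
    Tendsto (fun c : ℝ => (L (θ + c • v) - L (θ - c • v) - 2*c*(fderiv ℝ L θ v))/(2*c^3))
      (𝓝[>] (0:ℝ)) (𝓝 (iteratedFDeriv ℝ 3 L θ ![v, v, v] / 6)) := by
  have h3 : HasDerivAt (fun s : ℝ => fderiv ℝ (fderiv ℝ L) (θ + s • v) v v)
      (iteratedFDeriv ℝ 3 L θ ![v, v, v]) 0 := by
    have := aux_d3 θ v hL 0
    rw [show θ + (0:ℝ) • v = θ by rw [zero_smul, add_zero], ← aux_three_apply] at this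
    exact this
  have := aux_core_lim (aux_d1 θ v hL) (aux_d2 θ v hL) h3
  refine this.congr (fun c => ?_)
  rw [show θ + (-c) • v = θ - c • v by rw [neg_smul, ← sub_eq_add_neg],
    show θ + (0:ℝ) • v = θ by rw [zero_smul, add_zero]]

end key


lemma aux_norm_le_sum {d : ℕ} (x : EuclideanSpace ℝ (Fin d)) : ‖x‖ ≤ ∑ i, |x i| := by
  have hx := (EuclideanSpace.basisFun (Fin d) ℝ).sum_repr x
  calc ‖x‖ = ‖∑ i, (EuclideanSpace.basisFun (Fin d) ℝ).repr x i •
      (EuclideanSpace.basisFun (Fin d) ℝ) i‖ := by rw [hx]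
  _ ≤ ∑ i, ‖(EuclideanSpace.basisFun (Fin d) ℝ).repr x i •
      (EuclideanSpace.basisFun (Fin d) ℝ) i‖ := norm_sum_le _ _
  _ = ∑ i, |x i| := by
      refine Finset.sum_congr rfl fun i _ => ?_
      rw [norm_smul, EuclideanSpace.basisFun_repr, EuclideanSpace.basisFun_apply,
        EuclideanSpace.norm_single]
      simp [Real.norm_eq_abs]


/-- the rescaled bias of the two-query gradient estimator has the exact limit
`lim_{c→0⁺} c⁻² (E[ĝ(θ,c)] − ∇L(θ)) = (1/6) E[D³L(θ)(Δ,Δ,Δ) φ(Δ)]` for every `θ`. -/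
theorem limit_of_rescaled_bias_of_two_query_gradient_estimator
    (d : ℕ) (hd : 1 ≤ d)
    (L : EuclideanSpace ℝ (Fin d) → ℝ)
    (D₁ : ℝ) (hD₁ : 0 ≤ D₁)
    (hL : ContDiff ℝ 3 L)
    (hLbd : ∀ x, ‖iteratedFDeriv ℝ 3 L x‖ ≤ D₁)
    {Ω : Type*} {m0 : MeasurableSpace Ω} (μ : Measure Ω) [IsProbabilityMeasure μ]
    (Δ : Ω → EuclideanSpace ℝ (Fin d)) (hΔ : Measurable Δ)
    (φ : EuclideanSpace ℝ (Fin d) → EuclideanSpace ℝ (Fin d)) (hφ : Measurable φ)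
    -- `E[φ(Δ) Δᵀ] = I`
    (hid_int : ∀ i j : Fin d, Integrable (fun ω => φ (Δ ω) i * Δ ω j) μ)
    (hid : ∀ i j : Fin d, ∫ ω, φ (Δ ω) i * Δ ω j ∂μ = if i = j then (1 : ℝ) else 0)
    -- integrable noises with `E[ε⁺ − ε⁻ | Δ] = 0` a.s.
    (εp εm : Ω → ℝ) (hεp : Integrable εp μ) (hεm : Integrable εm μ)
    (hnoise : μ[fun ω => εp ω - εm ω|MeasurableSpace.comap Δ inferInstance] =ᵐ[μ] 0)
    -- the two-query gradient estimator
    (ghat : EuclideanSpace ℝ (Fin d) → ℝ → Ω → EuclideanSpace ℝ (Fin d))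
    (hghat : ∀ θ c ω, ghat θ c ω
      = ((L (θ + c • Δ ω) + εp ω - L (θ - c • Δ ω) - εm ω) / (2 * c)) • φ (Δ ω))
    -- moment bound `E[‖Δ‖³ ‖φ(Δ)‖] < ∞`
    (hmom_int : Integrable (fun ω => ‖Δ ω‖ ^ 3 * ‖φ (Δ ω)‖) μ)
    (θ : EuclideanSpace ℝ (Fin d))
    (hint : ∀ c : ℝ, 0 < c → Integrable (ghat θ c) μ)
    (hlim_int : Integrable
      (fun ω => (iteratedFDeriv ℝ 3 L θ ![Δ ω, Δ ω, Δ ω]) • φ (Δ ω)) μ) :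
    Tendsto (fun c : ℝ => (c ^ 2)⁻¹ • ((∫ ω, ghat θ c ω ∂μ) - gradient L θ))
      (𝓝[>] 0)
      (𝓝 ((6 : ℝ)⁻¹ • ∫ ω, (iteratedFDeriv ℝ 3 L θ ![Δ ω, Δ ω, Δ ω]) • φ (Δ ω) ∂μ)) := by
    classical
  set K : EuclideanSpace ℝ (Fin d) →L[ℝ] ℝ := fderiv ℝ L θ with hKdef
  set e : Fin d → EuclideanSpace ℝ (Fin d) := fun i => EuclideanSpace.single i (1:ℝ) with hedef
  set S : ℝ → Ω → ℝ :=
    fun c ω => (L (θ + c • Δ ω) - L (θ - c • Δ ω) - 2*c*(K (Δ ω)))/(2*c^3) with hSdef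
  set F : ℝ → Ω → EuclideanSpace ℝ (Fin d) := fun c ω => S c ω • φ (Δ ω) with hFdef
  have hφΔmeas : Measurable fun ω => φ (Δ ω) := hφ.comp hΔ
  -- measurability of the integrands
  have hSmeas : ∀ c : ℝ, Measurable (S c) := by
    intro c
    have hcont : Continuous (fun v : EuclideanSpace ℝ (Fin d) =>
        (L (θ + c • v) - L (θ - c • v) - 2*c*(K v))/(2*c^3)) := by
      apply Continuous.div_const
      exact ((hL.continuous.comp (continuous_const.add (continuous_id.const_smul c))).sub
        (hL.continuous.comp (continuous_const.sub (continuous_id.const_smul c)))).sub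
        (continuous_const.mul K.continuous)
    exact hcont.measurable.comp hΔ
  have hFmeas : ∀ c : ℝ, AEStronglyMeasurable (F c) μ :=
    fun c => ((hSmeas c).smul hφΔmeas).aestronglyMeasurable
  -- integrability of ‖Δ‖ ‖φ Δ‖
  have hM1 : Integrable (fun ω => ‖Δ ω‖ * ‖φ (Δ ω)‖) μ := by
    refine Integrable.mono' (g := fun ω => ∑ j, ∑ i, |φ (Δ ω) i * Δ ω j|)
      (integrable_finset_sum _ fun j _ => integrable_finset_sum _ fun i _ => (hid_int i j).abs)
      (hΔ.norm.mul hφΔmeas.norm).aestronglyMeasurable ?_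
    filter_upwards with ω
    rw [Real.norm_eq_abs, abs_of_nonneg (by positivity)]
    calc ‖Δ ω‖ * ‖φ (Δ ω)‖ ≤ (∑ j, |Δ ω j|) * (∑ i, |φ (Δ ω) i|) := by
          refine mul_le_mul (aux_norm_le_sum _) (aux_norm_le_sum _) (norm_nonneg _) ?_
          positivity
    _ = ∑ j, ∑ i, |φ (Δ ω) i * Δ ω j| := by
          rw [Finset.sum_mul]
          refine Finset.sum_congr rfl fun j _ => ?_
          rw [Finset.mul_sum]
          refine Finset.sum_congr rfl fun i _ => ?_
          rw [abs_mul]; ring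
  -- integrability of K(Δ) • φ(Δ)
  have hKint : Integrable (fun ω => (K (Δ ω)) • φ (Δ ω)) μ := by
    refine Integrable.mono' (hM1.const_mul ‖K‖)
      (((K.continuous.measurable.comp hΔ)).smul hφΔmeas).aestronglyMeasurable ?_
    filter_upwards with ω
    rw [norm_smul, Real.norm_eq_abs]
    have h1 : |K (Δ ω)| ≤ ‖K‖ * ‖Δ ω‖ := by
      simpa [Real.norm_eq_abs] using K.le_opNorm (Δ ω)
    calc |K (Δ ω)| * ‖φ (Δ ω)‖ ≤ (‖K‖ * ‖Δ ω‖) * ‖φ (Δ ω)‖ :=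
          mul_le_mul_of_nonneg_right h1 (norm_nonneg _)
    _ = ‖K‖ * (‖Δ ω‖ * ‖φ (Δ ω)‖) := by ring
  -- bound on S
  have hSbd : ∀ c : ℝ, 0 < c → ∀ ω, |S c ω| ≤ D₁/6 * ‖Δ ω‖^3 := by
    intro c hc ω
    have hb := aux_key_bound hL θ (Δ ω) hLbd hc.le
    have h2c : (0:ℝ) < 2*c^3 := by positivity
    rw [hSdef]
    simp only []
    rw [abs_div, abs_of_pos h2c, div_le_iff₀ h2c]
    calc |L (θ + c • Δ ω) - L (θ - c • Δ ω) - 2*c*(K (Δ ω))|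
        ≤ (D₁*‖Δ ω‖^3)/3 * c^3 := hb
    _ = D₁/6 * ‖Δ ω‖^3 * (2*c^3) := by ring
  have hFbd : ∀ c : ℝ, 0 < c → ∀ ω, ‖F c ω‖ ≤ D₁/6 * (‖Δ ω‖^3 * ‖φ (Δ ω)‖) := by
    intro c hc ω
    rw [hFdef]
    simp only []
    rw [norm_smul, Real.norm_eq_abs]
    calc |S c ω| * ‖φ (Δ ω)‖ ≤ (D₁/6 * ‖Δ ω‖^3) * ‖φ (Δ ω)‖ :=
          mul_le_mul_of_nonneg_right (hSbd c hc ω) (norm_nonneg _)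
    _ = D₁/6 * (‖Δ ω‖^3 * ‖φ (Δ ω)‖) := by ring
  have hFint : ∀ c : ℝ, 0 < c → Integrable (F c) μ := by
    intro c hc
    refine Integrable.mono' (hmom_int.const_mul (D₁/6)) (hFmeas c) ?_
    filter_upwards with ω using hFbd c hc ω
  -- coordinates of vector integrals
  have hproj : ∀ (f : Ω → EuclideanSpace ℝ (Fin d)), Integrable f μ → ∀ i : Fin d,
      (∫ ω, f ω ∂μ) i = ∫ ω, f ω i ∂μ := by
    intro f hf i
    have := (EuclideanSpace.proj (𝕜 := ℝ) i).integral_comp_comm hf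
    exact this.symm
  -- K expansion along coordinates
  have hrepr : ∀ x : EuclideanSpace ℝ (Fin d), K x = ∑ j, x j * K (e j) := by
    intro x
    conv_lhs => rw [← (EuclideanSpace.basisFun (Fin d) ℝ).sum_repr x]
    rw [map_sum]
    refine Finset.sum_congr rfl fun j _ => ?_
    rw [EuclideanSpace.basisFun_repr, ContinuousLinearMap.map_smul, smul_eq_mul,
      EuclideanSpace.basisFun_apply]
  -- gradient coordinates
  have hGi : ∀ i : Fin d, gradient L θ i = K (e i) := by
    intro i
    have h1 : inner (𝕜 := ℝ) (gradient L θ) (e i) = K (e i) :=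
      InnerProductSpace.toDual_symm_apply
    rw [← h1, hedef]
    simp only []
    rw [EuclideanSpace.inner_single_right]
    simp
  -- E[K(Δ) φ(Δ)] = gradient L θ
  have hKG : ∫ ω, (K (Δ ω)) • φ (Δ ω) ∂μ = gradient L θ := by
    ext i
    rw [hproj _ hKint i]
    have hfun : (fun ω => ((K (Δ ω)) • φ (Δ ω)) i)
        = fun ω => ∑ j, K (e j) * (φ (Δ ω) i * Δ ω j) := by
      funext ω
      have h0 : ((K (Δ ω)) • φ (Δ ω)) i = K (Δ ω) * φ (Δ ω) i := by
        simp [smul_eq_mul]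
      rw [h0, hrepr (Δ ω), Finset.sum_mul]
      exact Finset.sum_congr rfl fun j _ => by ring
    rw [hfun, integral_finset_sum _ (fun j _ => (hid_int i j).const_mul _)]
    have : ∀ j, ∫ ω, K (e j) * (φ (Δ ω) i * Δ ω j) ∂μ
        = K (e j) * (if i = j then (1:ℝ) else 0) := by
      intro j
      rw [integral_const_mul, hid]
    rw [Finset.sum_congr rfl fun j _ => this j]
    simp [hGi i]
  -- noise handling
  have hm : MeasurableSpace.comap Δ inferInstance ≤ m0 := hΔ.comap_le
  haveI : SigmaFinite (μ.trim hm) := by infer_instance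
  have hnoise_int : ∀ c : ℝ, 0 < c →
      Integrable (fun ω => ((εp ω - εm ω)/(2*c)) • φ (Δ ω)) μ := by
    intro c hc
    have hc0 : (2*c) ≠ 0 := by positivity
    have hdecomp : (fun ω => ((εp ω - εm ω)/(2*c)) • φ (Δ ω))
        = fun ω => ghat θ c ω - c^2 • F c ω - (K (Δ ω)) • φ (Δ ω) := by
      funext ω
      rw [hghat, hFdef]
      simp only []
      rw [smul_smul, ← sub_smul, ← sub_smul]
      congr 1
      rw [hSdef]
      field_simp
      ring
    rw [hdecomp]
    exact ((hint c hc).sub ((hFint c hc).smul (c^2))).sub hKint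
  have hnoise_zero : ∀ c : ℝ, 0 < c →
      ∫ ω, ((εp ω - εm ω)/(2*c)) • φ (Δ ω) ∂μ = 0 := by
    intro c hc
    have hc0 : (2*c) ≠ 0 := by positivity
    have hcoord : ∀ i : Fin d, ∫ ω, (φ (Δ ω) i) * (εp ω - εm ω) ∂μ = 0 := by
      intro i
      have hfSM : StronglyMeasurable[MeasurableSpace.comap Δ inferInstance]
          (fun ω => φ (Δ ω) i) := by
        have h1 : Measurable[MeasurableSpace.comap Δ inferInstance] Δ := comap_measurable Δ
        exact ((EuclideanSpace.proj (𝕜 := ℝ) i).continuous.measurable.comp (hφ.comp h1)).stronglyMeasurable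
      have hg : Integrable (fun ω => εp ω - εm ω) μ := hεp.sub hεm
      have hfg : Integrable ((fun ω => φ (Δ ω) i) * (fun ω => εp ω - εm ω)) μ := by
        have h1 := (EuclideanSpace.proj (𝕜 := ℝ) i).integrable_comp (hnoise_int c hc)
        have h2 := h1.const_mul (2*c)
        refine h2.congr ?_
        filter_upwards with ω
        show (2*c) * (EuclideanSpace.proj (𝕜 := ℝ) i (((εp ω - εm ω)/(2*c)) • φ (Δ ω)))
          = φ (Δ ω) i * (εp ω - εm ω)
        have : EuclideanSpace.proj (𝕜 := ℝ) i (((εp ω - εm ω)/(2*c)) • φ (Δ ω))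
            = ((εp ω - εm ω)/(2*c)) * φ (Δ ω) i := by simp [smul_eq_mul]
        rw [this]
        field_simp
      have hpull := condExp_mul_of_stronglyMeasurable_left hfSM hfg hg
      have hz : μ[(fun ω => φ (Δ ω) i) * (fun ω => εp ω - εm ω)|
          MeasurableSpace.comap Δ inferInstance] =ᵐ[μ] 0 := by
        refine hpull.trans ?_
        filter_upwards [hnoise] with ω hω
        simp [hω]
      calc ∫ ω, (φ (Δ ω) i) * (εp ω - εm ω) ∂μ
          = ∫ ω, ((fun ω => φ (Δ ω) i) * (fun ω => εp ω - εm ω)) ω ∂μ := rfl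
      _ = ∫ ω, (μ[(fun ω => φ (Δ ω) i) * (fun ω => εp ω - εm ω)|
            MeasurableSpace.comap Δ inferInstance]) ω ∂μ := (integral_condExp hm).symm
      _ = ∫ ω, (0 : Ω → ℝ) ω ∂μ := integral_congr_ae hz
      _ = 0 := by simp
    ext i
    rw [hproj _ (hnoise_int c hc) i]
    have hfun : (fun ω => ((((εp ω - εm ω)/(2*c)) • φ (Δ ω)) i))
        = fun ω => (2*c)⁻¹ * ((φ (Δ ω) i) * (εp ω - εm ω)) := by
      funext ω
      have : (((εp ω - εm ω)/(2*c)) • φ (Δ ω)) i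
          = ((εp ω - εm ω)/(2*c)) * φ (Δ ω) i := by simp [smul_eq_mul]
      rw [this]
      field_simp
    rw [hfun, integral_const_mul, hcoord i, mul_zero]
    simp
  -- the main identity
  have hmain : ∀ c : ℝ, 0 < c →
      (c^2)⁻¹ • ((∫ ω, ghat θ c ω ∂μ) - gradient L θ) = ∫ ω, F c ω ∂μ := by
    intro c hc
    have hc0 : (2*c) ≠ 0 := by positivity
    have hgdecomp : (fun ω => ghat θ c ω) = fun ω =>
        c^2 • F c ω + (K (Δ ω)) • φ (Δ ω) + ((εp ω - εm ω)/(2*c)) • φ (Δ ω) := by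
      funext ω
      rw [hghat, hFdef]
      simp only []
      rw [smul_smul, ← add_smul, ← add_smul]
      congr 1
      rw [hSdef]
      field_simp
      ring
    have i1 : Integrable (fun ω => c^2 • F c ω) μ := (hFint c hc).smul (c^2)
    have hI1 : (∫ ω, ghat θ c ω ∂μ)
        = (∫ ω, (c^2 • F c ω + (K (Δ ω)) • φ (Δ ω)) ∂μ)
          + ∫ ω, ((εp ω - εm ω)/(2*c)) • φ (Δ ω) ∂μ := by
      rw [hgdecomp]
      exact integral_add (i1.add hKint) (hnoise_int c hc)
    have hI2 : (∫ ω, (c^2 • F c ω + (K (Δ ω)) • φ (Δ ω)) ∂μ)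
        = c^2 • (∫ ω, F c ω ∂μ) + gradient L θ := by
      rw [integral_add i1 hKint, integral_smul, hKG]
    have hI : (∫ ω, ghat θ c ω ∂μ)
        = c^2 • (∫ ω, F c ω ∂μ) + gradient L θ := by
      rw [hI1, hI2, hnoise_zero c hc, add_zero]
    rw [hI, add_sub_cancel_right, smul_smul, inv_mul_cancel₀ (by positivity : (c:ℝ)^2 ≠ 0),
      one_smul]
  -- dominated convergence
  have hlim : Tendsto (fun c : ℝ => ∫ ω, F c ω ∂μ) (𝓝[>] (0:ℝ))
      (𝓝 (∫ ω, ((iteratedFDeriv ℝ 3 L θ ![Δ ω, Δ ω, Δ ω]) / 6) • φ (Δ ω) ∂μ)) := by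
    refine tendsto_integral_filter_of_dominated_convergence
      (bound := fun ω => D₁/6 * (‖Δ ω‖^3 * ‖φ (Δ ω)‖)) ?_ ?_ ?_ ?_
    · filter_upwards [self_mem_nhdsWithin] with c _ using hFmeas c
    · filter_upwards [self_mem_nhdsWithin] with c (hc : c ∈ Ioi (0:ℝ))
      filter_upwards with ω using hFbd c hc ω
    · exact hmom_int.const_mul _
    · filter_upwards with ω
      have := (aux_key_lim hL θ (Δ ω)).smul_const (φ (Δ ω))
      exact this
  have hlim_eq : ∫ ω, ((iteratedFDeriv ℝ 3 L θ ![Δ ω, Δ ω, Δ ω]) / 6) • φ (Δ ω) ∂μ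
      = (6:ℝ)⁻¹ • ∫ ω, (iteratedFDeriv ℝ 3 L θ ![Δ ω, Δ ω, Δ ω]) • φ (Δ ω) ∂μ := by
    rw [← integral_smul]
    refine integral_congr_ae ?_
    filter_upwards with ω
    rw [smul_smul]
    congr 1
    ring
  rw [hlim_eq] at hlim
  refine Tendsto.congr' ?_ hlim
  filter_upwards [self_mem_nhdsWithin] with c (hc : c ∈ Ioi (0:ℝ))
  exact (hmain c hc).symm
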